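/- Let V be a finite-dimensional real inner product space, Π ⊆ V a finite linearly independent set, Δ₊ a finite set of nonzero vectors in V each of which is a nonnegative-integer linear combination of Π, with Π ⊆ Δ₊, and Ψ ⊆ Δ₊ a subset. Assume (v) for all distinct δ, ε ∈ Π one has (δ,ε) ≤ 0, and if (δ,ε) < 0 then δ + ε ∈ Δ₊. Let s : V → V be a linear map preserving the inner product such that: (i) s(γ) ∈ Δ₊ for every γ ∈ Δ₊ \ Ψ; (ii) s(β) ∈ {β, −β} for every β ∈ Ψ; (iii) every β ∈ Ψ with s(β) = −β lies in Π; (iv) for all distinct δ, ε ∈ Π, δ + ε ∉ Ψ. Then for every α ∈ Ψ ∩ Π with s(α) = −α and every β ∈ Ψ \ {α}, one has (α, β) = 0. -/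

import Mathlib

lemma aux_no_neg_mem {V : Type*} [NormedAddCommGroup V] [InnerProductSpace ℝ V]
    (P D : Finset V)
    (hP : LinearIndependent ℝ (fun p : P => (p : V)))
    (hD : ∀ α ∈ D, α ≠ 0 ∧ ∃ k : V → ℕ, α = ∑ δ ∈ P, (k δ : ℝ) • δ)
    {γ : V} (hγ : γ ∈ D) (hγ' : -γ ∈ D) : False := by
  obtain ⟨hne, k, hk⟩ := hD γ hγ
  obtain ⟨-, m, hm⟩ := hD (-γ) hγ'
  have hsum : ∑ δ ∈ P, (((k δ : ℝ) + (m δ : ℝ)) • δ) = 0 := by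
    simp only [add_smul, Finset.sum_add_distrib, ← hk, ← hm]
    abel
  rw [← Finset.sum_coe_sort] at hsum
  have hz := Fintype.linearIndependent_iff.mp hP
    (fun i : P => ((k (i : V) : ℝ) + (m (i : V) : ℝ))) hsum
  apply hne
  rw [hk]
  apply Finset.sum_eq_zero
  intro δ hδ
  have h0 : (k δ : ℝ) + (m δ : ℝ) = 0 := hz ⟨δ, hδ⟩
  have hk0 : (k δ : ℝ) = 0 := by
    have : (0 : ℝ) ≤ (k δ : ℝ) := by positivity
    have : (0 : ℝ) ≤ (m δ : ℝ) := by positivity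
    linarith
  simp [hk0]

/-- Abstract version of Proposition 9 (orthogonality): if `α ∈ Ψ ∩ Π` satisfies
`s α = −α`, then `α` is orthogonal to every other element of `Ψ`. -/
theorem orthogonality_of_reflected_simple_root
    {V : Type*} [NormedAddCommGroup V] [InnerProductSpace ℝ V] [FiniteDimensional ℝ V]
    (P D Psi : Finset V)
    (hP : LinearIndependent ℝ (fun p : P => (p : V)))
    (hD : ∀ α ∈ D, α ≠ 0 ∧ ∃ k : V → ℕ, α = ∑ δ ∈ P, (k δ : ℝ) • δ)
    (hPD : P ⊆ D)
    (hPsiD : Psi ⊆ D)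
    -- (v): distinct simple roots have nonpositive inner product, and if it is negative
    -- their sum is a positive root
    (hv : ∀ δ ∈ P, ∀ ε ∈ P, δ ≠ ε →
      (inner ℝ δ ε : ℝ) ≤ 0 ∧ ((inner ℝ δ ε : ℝ) < 0 → δ + ε ∈ D))
    (s : V →ₗ[ℝ] V)
    (hs : ∀ x y : V, (inner ℝ (s x) (s y) : ℝ) = (inner ℝ x y : ℝ))
    -- (i)
    (h1 : ∀ γ ∈ D, γ ∉ Psi → s γ ∈ D)
    -- (ii)
    (h2 : ∀ β ∈ Psi, s β = β ∨ s β = -β)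
    -- (iii)
    (h3 : ∀ β ∈ Psi, s β = -β → β ∈ P)
    -- (iv)
    (h4 : ∀ δ ∈ P, ∀ ε ∈ P, δ ≠ ε → δ + ε ∉ Psi) :
    ∀ α ∈ Psi, α ∈ P → s α = -α → ∀ β ∈ Psi, β ≠ α → (inner ℝ α β : ℝ) = 0 := by
  intro α hαΨ hαP hsα β hβΨ hβα
  rcases h2 β hβΨ with hb | hb
  · -- s β = β
    have h := hs α β
    rw [hsα, hb, inner_neg_left] at h
    linarith
  · -- s β = -β, so β ∈ P
    have hβP := h3 β hβΨ hb
    have hne : α ≠ β := fun h => hβα h.symm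
    obtain ⟨hle, hlt⟩ := hv α hαP β hβP hne
    by_contra hcon
    have hneg : (inner ℝ α β : ℝ) < 0 := lt_of_le_of_ne hle hcon
    have hsumD : α + β ∈ D := hlt hneg
    have hsumΨ : α + β ∉ Psi := h4 α hαP β hβP hne
    have hsD : s (α + β) ∈ D := h1 _ hsumD hsumΨ
    have : s (α + β) = -(α + β) := by
      rw [map_add, hsα, hb]; abel
    rw [this] at hsD
    exact aux_no_neg_mem P D hP hD hsumD hsD
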